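/- Fix an integer n ≥ 2 and a real number r with 0 < r < √2/2, and define f(d) = n(n−1)/2^d and g(d) = 1 − [(1 − r^d)(1 − (n − 1)(1 − r²)^{d/2}/2)]^n for positive integers d. Then g(d)/f(d) is asymptotically equivalent to (4(1 − r²))^{d/2}/2 as d → ∞, and consequently g(d)/f(d) → ∞ as d → ∞. -/
import Mathlib


open Filter

/-- **Statement 4, case 2.** For a fixed integer `n ≥ 2` and fixed
`0 < r < √2/2`, with `f(d) = n(n-1)/2^d` and
`g(d) = 1 - [(1 - r^d)(1 - (n-1)(1-r²)^{d/2}/2)]^n`, the quotient `g(d)/f(d)`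
is asymptotically `(4(1-r²))^{d/2}/2`, and consequently `g(d)/f(d) → ∞`. -/
theorem failure_bounds_quotient_small_r
    (n : ℕ) (hn : 2 ≤ n) (r : ℝ) (hr0 : 0 < r) (hr1 : r < Real.sqrt 2 / 2) :
    Tendsto (fun d : ℕ =>
        ((1 - ((1 - r ^ d) * (1 - ((n : ℝ) - 1) * (1 - r ^ 2) ^ ((d : ℝ) / 2) / 2)) ^ n) /
            ((n : ℝ) * ((n : ℝ) - 1) / 2 ^ d)) /
          ((4 * (1 - r ^ 2)) ^ ((d : ℝ) / 2) / 2))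
      atTop (nhds 1) ∧
    Tendsto (fun d : ℕ =>
        (1 - ((1 - r ^ d) * (1 - ((n : ℝ) - 1) * (1 - r ^ 2) ^ ((d : ℝ) / 2) / 2)) ^ n) /
          ((n : ℝ) * ((n : ℝ) - 1) / 2 ^ d))
      atTop atTop := by
  have h2 : r ^ 2 < 1 / 2 := by
    have h := Real.sq_sqrt (by norm_num : (0:ℝ) ≤ 2)
    nlinarith [Real.sqrt_nonneg 2]
  set s : ℝ := 1 - r ^ 2 with hs_def
  have hs0 : 0 < s := by simp only [hs_def]; nlinarith
  have hs2 : 1 / 2 < s := by simp only [hs_def]; nlinarith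
  have hr1' : r < 1 := by nlinarith
  set t : ℝ := Real.sqrt s with ht_def
  have ht0 : 0 < t := Real.sqrt_pos.mpr hs0
  have hts : t ^ 2 = s := Real.sq_sqrt hs0.le
  have ht1 : t < 1 := by nlinarith
  have hrt : r < t := by nlinarith
  have h2t : 1 < 2 * t := by nlinarith
  have hn' : (2:ℝ) ≤ (n:ℝ) := by exact_mod_cast hn
  have hn0 : (n:ℝ) ≠ 0 := by linarith
  have hn1 : (n:ℝ) - 1 ≠ 0 := by intro h; nlinarith
  have hS : ∀ d : ℕ, s ^ ((d:ℝ)/2) = t ^ d := by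
    intro d
    rw [show ((d:ℝ)/2) = (1/2) * d by ring, Real.rpow_mul hs0.le, ← Real.sqrt_eq_rpow,
      Real.rpow_natCast]
  have hsqrt4 : Real.sqrt (4 * s) = 2 * t := by
    rw [show (4:ℝ) * s = (2*t)^2 by rw [mul_pow, hts]; norm_num,
      Real.sqrt_sq (by positivity)]
  have h4S : ∀ d : ℕ, (4 * s) ^ ((d:ℝ)/2) = 2 ^ d * t ^ d := by
    intro d
    rw [show ((d:ℝ)/2) = (1/2) * d by ring, Real.rpow_mul (by positivity),
      ← Real.sqrt_eq_rpow, hsqrt4, Real.rpow_natCast, mul_pow]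
  simp only [hS, h4S]
  -- abbreviations
  have keygen : ∀ (d : ℕ) (U S : ℝ), 1 - U ^ n = (1 - U) * S →
      U = (1 - r ^ d) * (1 - ((n:ℝ) - 1) * t ^ d / 2) →
      ((1 - U ^ n) / ((n:ℝ) * ((n:ℝ) - 1) / 2 ^ d)) / (2 ^ d * t ^ d / 2)
        = (2 / ((n:ℝ) - 1) * (r / t) ^ d + 1 - r ^ d) * (S / n) := by
    intro d U S hgeom hU
    have h2d : (2:ℝ) ^ d ≠ 0 := by positivity
    have htd : t ^ d ≠ 0 := by positivity
    rw [hgeom, hU, div_pow]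
    field_simp
    ring
  have key : ∀ d : ℕ,
      ((1 - ((1 - r ^ d) * (1 - ((n:ℝ) - 1) * t ^ d / 2)) ^ n)
          / ((n:ℝ) * ((n:ℝ) - 1) / 2 ^ d)) / (2 ^ d * t ^ d / 2)
        = (2 / ((n:ℝ) - 1) * (r / t) ^ d + 1 - r ^ d)
          * ((∑ k ∈ Finset.range n,
              ((1 - r ^ d) * (1 - ((n:ℝ) - 1) * t ^ d / 2)) ^ k) / n) := by
    have hgeo : ∀ U : ℝ, 1 - U ^ n = (1 - U) * ∑ k ∈ Finset.range n, U ^ k := fun U => by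
      linear_combination geom_sum_mul U n
    exact fun d => keygen d _ _ (hgeo _) rfl
  have hrpow : Tendsto (fun d : ℕ => r ^ d) atTop (nhds 0) :=
    tendsto_pow_atTop_nhds_zero_of_lt_one hr0.le hr1'
  have htpow : Tendsto (fun d : ℕ => t ^ d) atTop (nhds 0) :=
    tendsto_pow_atTop_nhds_zero_of_lt_one ht0.le ht1
  have hrtpow : Tendsto (fun d : ℕ => (r / t) ^ d) atTop (nhds 0) :=
    tendsto_pow_atTop_nhds_zero_of_lt_one (by positivity) ((div_lt_one ht0).mpr hrt)
  have hA : Tendsto (fun d : ℕ => 2 / ((n:ℝ) - 1) * (r / t) ^ d + 1 - r ^ d)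
      atTop (nhds 1) := by
    have := ((hrtpow.const_mul (2 / ((n:ℝ) - 1))).add (tendsto_const_nhds (x := (1:ℝ)))).sub hrpow
    simpa using this
  have hu1 : Tendsto (fun d : ℕ => (1 - r ^ d) * (1 - ((n:ℝ) - 1) * t ^ d / 2))
      atTop (nhds 1) := by
    have h1 : Tendsto (fun d : ℕ => 1 - r ^ d) atTop (nhds 1) := by
      simpa using (tendsto_const_nhds (x := (1:ℝ))).sub hrpow
    have h2' : Tendsto (fun d : ℕ => 1 - ((n:ℝ) - 1) * t ^ d / 2) atTop (nhds 1) := by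
      have := (htpow.const_mul ((n:ℝ) - 1)).div_const 2
      simpa using (tendsto_const_nhds (x := (1:ℝ))).sub this
    simpa using h1.mul h2'
  have hB : Tendsto (fun d : ℕ => (∑ k ∈ Finset.range n,
      ((1 - r ^ d) * (1 - ((n:ℝ) - 1) * t ^ d / 2)) ^ k) / n) atTop (nhds 1) := by
    have hsum : Tendsto (fun d : ℕ => ∑ k ∈ Finset.range n,
        ((1 - r ^ d) * (1 - ((n:ℝ) - 1) * t ^ d / 2)) ^ k) atTop (nhds (n : ℝ)) := by
      have := tendsto_finset_sum (Finset.range n) (fun k _ => hu1.pow k)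
      simpa using this
    have := hsum.div_const (n : ℝ)
    simpa [div_self hn0] using this
  have hF : Tendsto (fun d : ℕ =>
      ((1 - ((1 - r ^ d) * (1 - ((n:ℝ) - 1) * t ^ d / 2)) ^ n)
          / ((n:ℝ) * ((n:ℝ) - 1) / 2 ^ d)) / (2 ^ d * t ^ d / 2))
      atTop (nhds 1) := by
    have := hA.mul hB
    rw [mul_one] at this
    exact this.congr fun d => (key d).symm
  refine ⟨hF, ?_⟩
  have hinf : Tendsto (fun d : ℕ => (2:ℝ) ^ d * t ^ d / 2) atTop atTop := by
    have := (tendsto_pow_atTop_atTop_of_one_lt h2t).atTop_div_const (by norm_num : (0:ℝ) < 2)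
    exact this.congr fun d => by rw [mul_pow]
  have := hF.pos_mul_atTop one_pos hinf
  refine this.congr fun d => ?_
  have hne : (2:ℝ) ^ d * t ^ d / 2 ≠ 0 := by positivity
  exact div_mul_cancel₀ _ hne
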